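/- Let A be a set of integers each at least 3, let A_e be the even members of A, and suppose 2k ∉ A. Then ex(n, C_{2k}, 𝒞_A) ≥ (1/2^{2k-1}) · ex(n, C_{2k}, 𝒞_{A_e}), where 𝒞_S = {C_a : a ∈ S}. (Hence ex(n,C_{2k},𝒞_A) = Θ(ex(n,C_{2k},𝒞_{A_e})).) -/

import Mathlib

open SimpleGraph

/-- The number of copies of a graph `H` in `G`: subgraphs of `G` isomorphic to `H`. -/
noncomputable def copyCount {α β : Type*} (H : SimpleGraph α) (G : SimpleGraph β) : ℕ :=
  Nat.card {G' : G.Subgraph // Nonempty (H ≃g G'.coe)}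

/-- `G` contains no cycle of length `m`. -/
def CycleFreeOf {β : Type*} (G : SimpleGraph β) (m : ℕ) : Prop :=
  ∀ (v : β) (w : G.Walk v v), w.IsCycle → w.length ≠ m

/-- `ex(n, C_m, 𝒞_A)`: the maximum number of copies of `C_m` over graphs on `n` vertices
containing no cycle of length `a` for any `a ∈ A`. -/
noncomputable def exFam (n m : ℕ) (A : Set ℕ) : ℕ :=
  sSup {c | ∃ G : SimpleGraph (Fin n),
    (∀ a ∈ A, CycleFreeOf G a) ∧ c = _root_.copyCount (cycleGraph m) G}

/-! ### Auxiliary machinery -/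

/-- A subgraph of a graph on a finite vertex type is determined by its vertex set and
edge set. -/
lemma subgraph_pair_injective {V : Type*} (G : SimpleGraph V) :
    Function.Injective (fun H : G.Subgraph => (H.verts, H.edgeSet)) := by
  intro H1 H2 h
  simp only [Prod.mk.injEq] at h
  ext v w
  · rw [h.1]
  · have := Set.ext_iff.mp h.2 s(v, w)
    simpa [Subgraph.mem_edgeSet] using this

lemma subgraph_finite {V : Type*} [Finite V] (G : SimpleGraph V) : Finite G.Subgraph :=
  Finite.of_injective _ (subgraph_pair_injective G)

/-- Adjacent vertices of an even cycle graph have values of different parity. -/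
lemma cycleGraph_parity' {k : ℕ} {u v : Fin (2 * k)}
    (h : (cycleGraph (2 * k)).Adj u v) : u.val % 2 ≠ v.val % 2 := by
  have key : ∀ a b : Fin (2 * k), (a - b).val = 1 → a.val % 2 ≠ b.val % 2 := by
    intro a b hab
    rw [Fin.sub_def] at hab
    simp only [Fin.val_mk] at hab
    have ha : a.val < 2 * k := a.isLt
    have hb : b.val < 2 * k := b.isLt
    set s := 2 * k - b.val + a.val with hs
    have hmod : s % (2 * k) = s ∨ s % (2 * k) = s - 2 * k := by
      rcases Nat.lt_or_ge s (2 * k) with hlt | hge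
      · exact Or.inl (Nat.mod_eq_of_lt hlt)
      · right
        rw [Nat.mod_eq_sub_mod hge, Nat.mod_eq_of_lt (by omega)]
    omega
  rw [cycleGraph_adj'] at h
  rcases h with h | h
  · exact key u v h
  · exact fun he => key v u h he.symm

/-- Parity of the endpoints of a walk in a properly 2-colored graph. -/
lemma walk_parity {V : Type*} {H : SimpleGraph V} {f : V → Bool}
    (hf : ∀ u v, H.Adj u v → f u ≠ f v) {u v : V} (w : H.Walk u v) :
    (f u = f v ↔ Even w.length) := by
  induction w with
  | nil => simp
  | @cons a b c h p ih =>
    rw [Walk.length_cons, Nat.even_add_one, ← ih]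
    have hne := hf _ _ h
    cases h1 : f a <;> cases h2 : f b <;> cases h3 : f c <;> simp_all

/-- The bipartite subgraph of `G` induced by a `2`-coloring `f`. -/
def bipSub {V : Type*} (G : SimpleGraph V) (f : V → Bool) : SimpleGraph V where
  Adj u v := G.Adj u v ∧ f u ≠ f v
  symm := ⟨fun _ _ h => ⟨h.1.symm, h.2.symm⟩⟩
  loopless := ⟨fun _ h => h.2 rfl⟩

lemma bipSub_le {V : Type*} (G : SimpleGraph V) (f : V → Bool) : bipSub G f ≤ G :=
  fun _ _ h => (h : G.Adj _ _ ∧ _).1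

/-- If `G` has no even cycles with length in `A`, then each `bipSub G f` has no cycles with
length in `A` at all. -/
lemma bipSub_free {V : Type*} {G : SimpleGraph V} {A : Set ℕ}
    (hG : ∀ a ∈ {a | a ∈ A ∧ Even a}, CycleFreeOf G a) (f : V → Bool) :
    ∀ a ∈ A, CycleFreeOf (bipSub G f) a := by
  intro a ha v w hw hlen
  by_cases he : Even a
  · exact hG a ⟨ha, he⟩ v (w.mapLe (bipSub_le G f)) (hw.mapLe _) (by
      rw [← hlen, Walk.mapLe]; exact Walk.length_map _ _)
  · exact he (hlen ▸ (walk_parity (H := bipSub G f) (fun u v (h : G.Adj u v ∧ f u ≠ f v) => h.2) w).mp rfl)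

/-- `f` properly 2-colors the subgraph `K`. -/
def Surv {V : Type*} {G : SimpleGraph V} (f : V → Bool) (K : G.Subgraph) : Prop :=
  ∀ ⦃u v : V⦄, K.Adj u v → f u ≠ f v

/-- A subgraph properly colored by `f` is a subgraph of `bipSub G f`. -/
def toBip {V : Type*} (G : SimpleGraph V) (f : V → Bool) (K : G.Subgraph) (hK : Surv f K) :
    (bipSub G f).Subgraph where
  verts := K.verts
  Adj := K.Adj
  adj_sub h := show G.Adj _ _ ∧ _ from ⟨K.adj_sub h, hK h⟩
  edge_vert h := K.edge_vert h
  symm := K.symm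

lemma toBip_coe {V : Type*} (G : SimpleGraph V) (f : V → Bool) (K : G.Subgraph)
    (hK : Surv f K) : (toBip G f K hK).coe = K.coe := rfl

/-- At least `2 ^ (n + 1 - 2k)` colorings properly color a given copy of `C_{2k}`. -/
lemma count_surv {n k : ℕ} (hk : 1 ≤ k) {G : SimpleGraph (Fin n)} (K : G.Subgraph)
    (e : cycleGraph (2 * k) ≃g K.coe) :
    2 ^ (n + 1 - 2 * k) ≤ Nat.card {f : Fin n → Bool // Surv f K} := by
  classical
  haveI : NeZero (2 * k) := ⟨by omega⟩
  have hverts : Nat.card K.verts = 2 * k := by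
    have := Nat.card_congr e.toEquiv.symm
    simpa using this
  have hn : 2 * k ≤ n := by
    have h1 : Nat.card K.verts ≤ Nat.card (Fin n) :=
      Nat.card_le_card_of_injective (Subtype.val : K.verts → Fin n) Subtype.val_injective
    rwa [hverts, Nat.card_eq_fintype_card, Fintype.card_fin] at h1
  have hΦ : ∀ (p : Bool × (↥(K.vertsᶜ) → Bool)),
      Surv (fun v => if h : v ∈ K.verts then p.1 ^^ decide ((e.symm ⟨v, h⟩).val % 2 = 1)
            else p.2 ⟨v, h⟩) K := by
    intro p u v huv
    have hu : u ∈ K.verts := K.edge_vert huv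
    have hv : v ∈ K.verts := K.edge_vert huv.symm
    simp only [dif_pos hu, dif_pos hv]
    have hadj : (cycleGraph (2 * k)).Adj (e.symm ⟨u, hu⟩) (e.symm ⟨v, hv⟩) := by
      rw [e.symm.map_adj_iff]
      exact huv
    have hpar := cycleGraph_parity' hadj
    have hd : decide ((e.symm ⟨u, hu⟩).val % 2 = 1) ≠ decide ((e.symm ⟨v, hv⟩).val % 2 = 1) := by
      simp only [ne_eq, decide_eq_decide]
      omega
    intro hcon
    apply hd
    cases p.1 <;> simpa using hcon
  set Φ : Bool × (↥(K.vertsᶜ) → Bool) → {f : Fin n → Bool // Surv f K} :=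
    fun p => ⟨_, hΦ p⟩ with hΦdef
  have hinj : Function.Injective Φ := by
    intro p q hpq
    have hfun := congrArg Subtype.val hpq
    simp only [hΦdef] at hfun
    have hb : p.1 = q.1 := by
      have h1 := congrFun hfun ((e 0 : K.verts) : Fin n)
      have hmem := (e 0).2
      have h3 : (⟨((e 0 : K.verts) : Fin n), hmem⟩ : K.verts) = e 0 := Subtype.coe_eta _ _
      rw [dif_pos hmem, dif_pos hmem, h3, e.symm_apply_apply] at h1
      simpa using h1
    have hg : p.2 = q.2 := by
      funext x
      have h1 := congrFun hfun (x : Fin n)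
      have hx : (x : Fin n) ∉ K.verts := x.2
      simp only [dif_neg hx] at h1
      simpa using h1
    exact Prod.ext hb hg
  have hcard := Nat.card_le_card_of_injective Φ hinj
  have hcompl : Nat.card ↥(K.vertsᶜ) = n - 2 * k := by
    have h1 := Set.ncard_add_ncard_compl K.verts
    rw [Nat.card_coe_set_eq]
    rw [Nat.card_coe_set_eq] at hverts
    simp only [Nat.card_eq_fintype_card, Fintype.card_fin] at h1
    omega
  have hdom : Nat.card (Bool × (↥(K.vertsᶜ) → Bool)) = 2 ^ (n + 1 - 2 * k) := by
    rw [Nat.card_prod, Nat.card_fun, hcompl]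
    simp only [Nat.card_eq_fintype_card, Fintype.card_bool]
    rw [← pow_succ']
    congr 1
    omega
  omega

/-- The double-counting inequality. -/
lemma copyCount_mul_le {n k : ℕ} (hk : 1 ≤ k) (G : SimpleGraph (Fin n)) :
    _root_.copyCount (cycleGraph (2 * k)) G * 2 ^ (n + 1 - 2 * k) ≤
      ∑ f : Fin n → Bool, _root_.copyCount (cycleGraph (2 * k)) (bipSub G f) := by
  classical
  haveI : Finite G.Subgraph := subgraph_finite G
  haveI : ∀ f : Fin n → Bool, Finite (bipSub G f).Subgraph := fun f => subgraph_finite _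
  haveI instCop : Fintype {G' : G.Subgraph // Nonempty (cycleGraph (2 * k) ≃g G'.coe)} :=
    Fintype.ofFinite _
  have step1 : ∀ f : Fin n → Bool,
      (Finset.univ.filter
        (fun K : {G' : G.Subgraph // Nonempty (cycleGraph (2 * k) ≃g G'.coe)} =>
          Surv f K.1)).card
        ≤ _root_.copyCount (cycleGraph (2 * k)) (bipSub G f) := by
    intro f
    rw [← Fintype.card_subtype, _root_.copyCount, ← Nat.card_eq_fintype_card]
    apply Nat.card_le_card_of_injective
      (f := fun K : {K : {G' : G.Subgraph // Nonempty (cycleGraph (2 * k) ≃g G'.coe)} //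
          Surv f K.1} =>
        (⟨toBip G f K.1.1 K.2, by
            obtain ⟨e⟩ := K.1.2
            exact ⟨(toBip_coe G f K.1.1 K.2).symm ▸ e⟩⟩ :
          {G' : (bipSub G f).Subgraph // Nonempty (cycleGraph (2 * k) ≃g G'.coe)}))
    intro K1 K2 h
    have h' : toBip G f K1.1.1 K1.2 = toBip G f K2.1.1 K2.2 := congrArg Subtype.val h
    have hv : K1.1.1.verts = K2.1.1.verts :=
      congrArg (fun H : (bipSub G f).Subgraph => H.verts) h'
    have ha : K1.1.1.Adj = K2.1.1.Adj :=
      congrArg (fun H : (bipSub G f).Subgraph => H.Adj) h'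
    exact Subtype.ext (Subtype.ext (Subgraph.ext hv ha))
  calc _root_.copyCount (cycleGraph (2 * k)) G * 2 ^ (n + 1 - 2 * k)
      = ∑ _K : {G' : G.Subgraph // Nonempty (cycleGraph (2 * k) ≃g G'.coe)},
          2 ^ (n + 1 - 2 * k) := by
        rw [Finset.sum_const, Finset.card_univ, _root_.copyCount, Nat.card_eq_fintype_card,
          smul_eq_mul]
    _ ≤ ∑ K : {G' : G.Subgraph // Nonempty (cycleGraph (2 * k) ≃g G'.coe)},
          (Finset.univ.filter (fun f : Fin n → Bool => Surv f K.1)).card := by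
        apply Finset.sum_le_sum
        intro K _
        obtain ⟨e⟩ := K.2
        have := count_surv hk K.1 e
        rwa [Nat.card_eq_fintype_card, Fintype.card_subtype] at this
    _ = ∑ f : Fin n → Bool,
          (Finset.univ.filter
            (fun K : {G' : G.Subgraph // Nonempty (cycleGraph (2 * k) ≃g G'.coe)} =>
              Surv f K.1)).card := by
        simp only [Finset.card_filter]
        rw [Finset.sum_comm]
    _ ≤ ∑ f : Fin n → Bool, _root_.copyCount (cycleGraph (2 * k)) (bipSub G f) :=
        Finset.sum_le_sum fun f _ => step1 f

/-- If each member of `A` is at least 3, `A_e` is the set of even members of `A`, and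
`2k ∉ A`, then `ex(n, C_{2k}, 𝒞_A) ≥ (1/2^{2k-1}) · ex(n, C_{2k}, 𝒞_{A_e})`. -/
theorem stmt_6 (A : Set ℕ) (hA : ∀ a ∈ A, 3 ≤ a) (k n : ℕ) (hk : 2 ≤ k)
    (h2k : 2 * k ∉ A) :
    exFam n (2 * k) {a | a ∈ A ∧ Even a} ≤ 2 ^ (2 * k - 1) * exFam n (2 * k) A := by
  classical
  have hbdd : BddAbove {c | ∃ G : SimpleGraph (Fin n),
      (∀ a ∈ A, CycleFreeOf G a) ∧ c = _root_.copyCount (cycleGraph (2 * k)) G} := by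
    refine ⟨Nat.card (Set (Fin n) × Set (Sym2 (Fin n))), ?_⟩
    rintro c ⟨G, -, rfl⟩
    haveI : Finite G.Subgraph := subgraph_finite G
    calc _root_.copyCount (cycleGraph (2 * k)) G
        ≤ Nat.card G.Subgraph :=
          Nat.card_le_card_of_injective Subtype.val Subtype.val_injective
      _ ≤ Nat.card (Set (Fin n) × Set (Sym2 (Fin n))) :=
          Nat.card_le_card_of_injective _ (subgraph_pair_injective G)
  rw [exFam]
  refine csSup_le' ?_
  rintro c ⟨G, hGfree, rfl⟩
  by_cases hc : _root_.copyCount (cycleGraph (2 * k)) G = 0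
  · rw [hc]; exact Nat.zero_le _
  haveI : Finite G.Subgraph := subgraph_finite G
  obtain ⟨K⟩ := (Nat.card_pos_iff.mp (Nat.pos_of_ne_zero hc)).1
  obtain ⟨e⟩ := K.2
  have hn : 2 * k ≤ n := by
    have hverts : Nat.card K.1.verts = 2 * k := by
      have := Nat.card_congr e.toEquiv.symm
      simpa using this
    have h1 : Nat.card K.1.verts ≤ Nat.card (Fin n) :=
      Nat.card_le_card_of_injective (Subtype.val : K.1.verts → Fin n) Subtype.val_injective
    rwa [hverts, Nat.card_eq_fintype_card, Fintype.card_fin] at h1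
  have hsum := copyCount_mul_le (by omega : 1 ≤ k) G
  have hM : ∀ f : Fin n → Bool,
      _root_.copyCount (cycleGraph (2 * k)) (bipSub G f) ≤ exFam n (2 * k) A := fun f =>
    le_csSup hbdd ⟨bipSub G f, bipSub_free hGfree f, rfl⟩
  have h2 : ∑ f : Fin n → Bool, _root_.copyCount (cycleGraph (2 * k)) (bipSub G f)
      ≤ 2 ^ n * exFam n (2 * k) A := by
    calc ∑ f : Fin n → Bool, _root_.copyCount (cycleGraph (2 * k)) (bipSub G f)
        ≤ ∑ _f : Fin n → Bool, exFam n (2 * k) A := Finset.sum_le_sum fun f _ => hM f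
      _ = 2 ^ n * exFam n (2 * k) A := by
          rw [Finset.sum_const, Finset.card_univ, smul_eq_mul]
          congr 1
          simp [Fintype.card_fun]
  have hsplit : (2 : ℕ) ^ n = 2 ^ (2 * k - 1) * 2 ^ (n + 1 - 2 * k) := by
    rw [← pow_add]
    congr 1
    omega
  have hfinal : _root_.copyCount (cycleGraph (2 * k)) G * 2 ^ (n + 1 - 2 * k)
      ≤ (2 ^ (2 * k - 1) * exFam n (2 * k) A) * 2 ^ (n + 1 - 2 * k) := by
    calc _root_.copyCount (cycleGraph (2 * k)) G * 2 ^ (n + 1 - 2 * k)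
        ≤ 2 ^ n * exFam n (2 * k) A := le_trans hsum h2
      _ = (2 ^ (2 * k - 1) * exFam n (2 * k) A) * 2 ^ (n + 1 - 2 * k) := by
          rw [hsplit]; ring
  exact Nat.le_of_mul_le_mul_right hfinal (Nat.pow_pos (by norm_num))
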